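/- Let (X, ℬ, μ) be a probability space, T : X → X a measure-preserving transformation, f ∈ L¹(μ), and λ : X → ℝ a T-invariant measurable function (λ∘T = λ a.e.) whose positive part λ⁺ is integrable. Then ∫_{{f* > λ}} (f − λ) dμ ≥ 0, where f* = sup_{N≥1} max_{1≤k≤N} A_k f is the maximal function of f. -/

import Mathlib

open MeasureTheory Filter Set Function
set_option linter.unusedSectionVars false
set_option linter.unusedVariables false

section Garsia

variable {X : Type*} [MeasurableSpace X] {μ : Measure X} {T : X → X}

/-- truncated maximal function of the Birkhoff sums (including `k = 0`, so it is `≥ 0`). -/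
noncomputable def mxf (T : X → X) (g : X → ℝ) : ℕ → X → ℝ
  | 0 => fun _ => 0
  | (N + 1) => fun x => max (mxf T g N x) (birkhoffSum T g (N + 1) x)

lemma mxf_nonneg (g : X → ℝ) : ∀ N x, 0 ≤ mxf T g N x
  | 0, x => le_refl 0
  | (N + 1), x => le_trans (mxf_nonneg g N x) (le_max_left _ _)

lemma mxf_le_succ (g : X → ℝ) (N : ℕ) (x : X) : mxf T g N x ≤ mxf T g (N + 1) x :=
  le_max_left _ _

lemma mxf_mono (g : X → ℝ) (x : X) : Monotone fun N => mxf T g N x :=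
  monotone_nat_of_le_succ fun N => mxf_le_succ g N x

lemma birkhoffSum_le_mxf (g : X → ℝ) : ∀ N x, birkhoffSum T g N x ≤ mxf T g N x
  | 0, x => by simp [mxf]
  | (N + 1), x => le_max_right _ _

lemma measurable_birkhoffSum (hT : Measurable T) {g : X → ℝ} (hg : Measurable g) (n : ℕ) :
    Measurable (birkhoffSum T g n) := by
  unfold birkhoffSum
  exact Finset.measurable_sum _ fun k _ => hg.comp (hT.iterate k)

lemma measurable_mxf (hT : Measurable T) {g : X → ℝ} (hg : Measurable g) :
    ∀ N, Measurable (mxf T g N)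
  | 0 => measurable_const
  | (N + 1) => (measurable_mxf hT hg N).max (measurable_birkhoffSum hT hg (N + 1))

lemma integrable_birkhoffSum (hT : MeasurePreserving T μ μ) {g : X → ℝ}
    (hg : Integrable g μ) : ∀ n, Integrable (birkhoffSum T g n) μ
  | 0 => by simp only [birkhoffSum_zero']; exact integrable_zero _ _ _
  | (n + 1) => by
      have h1 : Integrable (fun x => g (T^[n] x)) μ :=
        ((hT.iterate n).integrable_comp hg.aestronglyMeasurable).mpr hg
      have := (integrable_birkhoffSum hT hg n).add h1
      refine this.congr (Eventually.of_forall fun x => ?_)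
      exact (birkhoffSum_succ T g n x).symm

lemma integrable_mxf (hT : MeasurePreserving T μ μ) {g : X → ℝ} (hg : Integrable g μ) :
    ∀ N, Integrable (mxf T g N) μ
  | 0 => integrable_zero _ _ _
  | (N + 1) => by
      have := (integrable_mxf hT hg N).sup (integrable_birkhoffSum hT hg (N + 1))
      exact this

/-- the key pointwise inequality of Garsia's proof. -/
lemma mxf_key (g : X → ℝ) : ∀ N x, mxf T g N x ≤ max 0 (g x + mxf T g N (T x))
  | 0, x => le_max_left _ _
  | (N + 1), x => by
      refine max_le ?_ ?_
      · exact le_trans (mxf_key g N x)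
          (max_le_max le_rfl (add_le_add le_rfl (mxf_le_succ g N (T x))))
      · rw [birkhoffSum_succ' T g N x]
        refine le_trans ?_ (le_max_right 0 _)
        exact add_le_add le_rfl
          ((birkhoffSum_le_mxf g N (T x)).trans (mxf_le_succ g N (T x)))

lemma mxf_pos_iff (g : X → ℝ) : ∀ N x, 0 < mxf T g N x →
    ∃ k, 1 ≤ k ∧ 0 < birkhoffSum T g k x
  | 0, x => by intro h; exact absurd h (lt_irrefl 0)
  | (N + 1), x => by
      intro h
      rcases lt_max_iff.mp h with h | h
      · exact mxf_pos_iff g N x h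
      · exact ⟨N + 1, Nat.succ_le_succ (Nat.zero_le N), h⟩

end Garsia

section Garsia2

variable {X : Type*} [MeasurableSpace X] {μ : Measure X} [IsFiniteMeasure μ] {T : X → X}

/-- **Maximal ergodic theorem** (Garsia's proof): the integral of `g` over the set where some
Birkhoff sum is positive is nonnegative. -/
theorem garsia_integral_nonneg (hT : MeasurePreserving T μ μ) {g : X → ℝ}
    (hgm : Measurable g) (hg : Integrable g μ) :
    0 ≤ ∫ x in {x | ∃ k, 1 ≤ k ∧ 0 < birkhoffSum T g k x}, g x ∂μ := by
  have hTm : Measurable T := hT.measurable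
  set E : ℕ → Set X := fun N => {x | 0 < mxf T g N x} with hE
  have hEm : ∀ N, MeasurableSet (E N) := fun N =>
    measurableSet_lt measurable_const (measurable_mxf hTm hgm N)
  have hEmono : Monotone E := by
    refine monotone_nat_of_le_succ fun N x hx => ?_
    exact lt_of_lt_of_le hx (mxf_le_succ g N x)
  have hUnion : (⋃ N, E N) = {x | ∃ k, 1 ≤ k ∧ 0 < birkhoffSum T g k x} := by
    ext x
    simp only [mem_iUnion, mem_setOf_eq]
    constructor
    · rintro ⟨N, hN⟩; exact mxf_pos_iff g N x hN
    · rintro ⟨k, hk1, hk⟩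
      exact ⟨k, lt_of_lt_of_le hk (birkhoffSum_le_mxf g k x)⟩
  -- integral over each E N is nonnegative
  have step : ∀ N, 0 ≤ ∫ x in E N, g x ∂μ := by
    intro N
    have hMint : Integrable (mxf T g N) μ := integrable_mxf hT hg N
    have hMTint : Integrable (fun x => mxf T g N (T x)) μ :=
      (hT.integrable_comp hMint.aestronglyMeasurable).mpr hMint
    have h1 : ∀ x ∈ E N, mxf T g N x - mxf T g N (T x) ≤ g x := by
      intro x hx
      have hkey := mxf_key (T := T) g N x
      have hpos : (0 : ℝ) < mxf T g N x := hx
      rcases le_or_gt (g x + mxf T g N (T x)) 0 with h | h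
      · exact absurd (hkey.trans (max_le le_rfl h)) (not_le.mpr hpos)
      · have := hkey.trans_eq (max_eq_right h.le)
        linarith
    have h2 : ∫ x in E N, (mxf T g N x - mxf T g N (T x)) ∂μ ≤ ∫ x in E N, g x ∂μ :=
      setIntegral_mono_on (hMint.sub hMTint).integrableOn hg.integrableOn (hEm N) h1
    have h3 : ∫ x in E N, (mxf T g N x - mxf T g N (T x)) ∂μ
        = ∫ x in E N, mxf T g N x ∂μ - ∫ x in E N, mxf T g N (T x) ∂μ :=
      integral_sub hMint.integrableOn hMTint.integrableOn
    have h4 : ∫ x in E N, mxf T g N x ∂μ = ∫ x, mxf T g N x ∂μ := by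
      refine setIntegral_eq_integral_of_forall_compl_eq_zero fun x hx => ?_
      have : ¬ (0 < mxf T g N x) := hx
      exact le_antisymm (not_lt.mp this) (mxf_nonneg g N x)
    have h5 : ∫ x in E N, mxf T g N (T x) ∂μ ≤ ∫ x, mxf T g N (T x) ∂μ :=
      setIntegral_le_integral hMTint (Eventually.of_forall fun x => mxf_nonneg g N (T x))
    have h6 : ∫ x, mxf T g N (T x) ∂μ = ∫ x, mxf T g N x ∂μ := by
      have := integral_map (φ := T) hTm.aemeasurable
        ((measurable_mxf hTm hgm N).aestronglyMeasurable (μ := μ.map T))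
      rw [hT.map_eq] at this
      exact this.symm
    linarith
  have htends := tendsto_setIntegral_of_monotone hEm hEmono
    (hUnion ▸ hg.integrableOn : IntegrableOn g (⋃ N, E N) μ)
  have := ge_of_tendsto htends (Eventually.of_forall step)
  rwa [hUnion] at this

/-- lintegral form of the conclusion. -/
theorem garsia_lintegral (hT : MeasurePreserving T μ μ) {g : X → ℝ}
    (hgm : Measurable g) (hg : Integrable g μ) :
    ∫⁻ x in {x | ∃ k, 1 ≤ k ∧ 0 < birkhoffSum T g k x}, ENNReal.ofReal (-g x) ∂μ
      ≤ ∫⁻ x in {x | ∃ k, 1 ≤ k ∧ 0 < birkhoffSum T g k x}, ENNReal.ofReal (g x) ∂μ := by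
  set s := {x | ∃ k, 1 ≤ k ∧ 0 < birkhoffSum T g k x}
  have h0 : 0 ≤ ∫ x in s, g x ∂μ := garsia_integral_nonneg hT hgm hg
  have hi : Integrable g (μ.restrict s) := hg.integrableOn
  have heq := integral_eq_lintegral_pos_part_sub_lintegral_neg_part hi
  have hA : ∫⁻ x in s, ENNReal.ofReal (g x) ∂μ ≠ ⊤ :=
    ((lintegral_ofReal_le_lintegral_enorm _).trans_lt hi.2).ne
  have hB : ∫⁻ x in s, ENNReal.ofReal (-g x) ∂μ ≠ ⊤ := by
    refine ((lintegral_mono fun x => ?_).trans_lt hi.2).ne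
    calc ENNReal.ofReal (-g x) ≤ (‖-g x‖₊ : ENNReal) := Real.ofReal_le_enorm _
      _ = (‖g x‖₊ : ENNReal) := by rw [nnnorm_neg]
  rw [heq] at h0
  have := sub_nonneg.mp h0
  exact (ENNReal.toReal_le_toReal hB hA).mp this

end Garsia2


/-- **Maximal Ergodic Theorem with invariant function λ.**
If `T` preserves the probability measure `μ`, `f ∈ L¹(μ)`, and `lam` is a measurable
`T`-invariant function with integrable positive part, then
`∫_{f* > lam} (f - lam) dμ ≥ 0`, where `f* = sup_{k ≥ 1} A_k f` and
`A_k f = (1/k) ∑_{j<k} f ∘ T^j`.  The integral is interpreted with the convention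
`∫ (f - lam)⁺ ≥ ∫ (f - lam)⁻` over the set (so the value `+∞` is allowed). -/
theorem maximal_ergodic_theorem_invariant_lambda
    {X : Type*} [MeasurableSpace X] (μ : Measure X) [IsProbabilityMeasure μ]
    (T : X → X) (hT : MeasurePreserving T μ μ)
    (f : X → ℝ) (hf : Integrable f μ)
    (lam : X → ℝ) (hlam_meas : Measurable lam)
    (hinv : lam ∘ T =ᵐ[μ] lam)
    (hlam_pos : Integrable (fun x => max (lam x) 0) μ) :
    ∫⁻ x in {x | ∃ k : ℕ, 1 ≤ k ∧ lam x < birkhoffAverage ℝ T f k x},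
        ENNReal.ofReal (lam x - f x) ∂μ
      ≤ ∫⁻ x in {x | ∃ k : ℕ, 1 ≤ k ∧ lam x < birkhoffAverage ℝ T f k x},
        ENNReal.ofReal (f x - lam x) ∂μ := by
  classical
  -- a measurable representative of `f`
  obtain ⟨f', hf'm, hff'⟩ : ∃ f' : X → ℝ, Measurable f' ∧ f =ᵐ[μ] f' :=
    ⟨hf.1.mk f, hf.1.stronglyMeasurable_mk.measurable, hf.1.ae_eq_mk⟩
  have hf'i : Integrable f' μ := hf.congr hff'
  have hiter : ∀ j : ℕ, Measure.QuasiMeasurePreserving T^[j] μ μ :=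
    fun j => (hT.iterate j).quasiMeasurePreserving
  have hlam_iter : ∀ j : ℕ, (fun x => lam (T^[j] x)) =ᵐ[μ] lam := by
    intro j
    induction j with
    | zero => simp
    | succ j ih =>
      have h1 : (fun x => lam (T^[j + 1] x)) = fun x => (lam ∘ T) (T^[j] x) := by
        funext x
        simp [Function.iterate_succ_apply', Function.comp]
      rw [h1]
      exact ((hiter j).ae_eq hinv).trans ih
  have hf_iter : ∀ j : ℕ, (fun x => f (T^[j] x)) =ᵐ[μ] fun x => f' (T^[j] x) :=
    fun j => (hiter j).ae_eq hff'
  have hG : ∀ᵐ x ∂μ, ∀ j : ℕ, f (T^[j] x) = f' (T^[j] x) ∧ lam (T^[j] x) = lam x := by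
    rw [ae_all_iff]
    intro j
    filter_upwards [hf_iter j, hlam_iter j] with x h1 h2 using ⟨h1, h2⟩
  -- truncated invariant functions
  have hlamM_meas : ∀ M : ℕ, Measurable (fun x => max (lam x) (-(M : ℝ))) :=
    fun M => hlam_meas.max measurable_const
  have hlamM_int : ∀ M : ℕ, Integrable (fun x => max (lam x) (-(M : ℝ))) μ := by
    intro M
    refine (hlam_pos.add (integrable_const (M : ℝ))).mono
      ((hlamM_meas M).aestronglyMeasurable) (Eventually.of_forall fun x => ?_)
    have h0 : (0 : ℝ) ≤ (M : ℝ) := Nat.cast_nonneg M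
    have h1 : (0 : ℝ) ≤ max (lam x) 0 := le_max_right _ _
    have h2 := le_max_right (lam x) (-(M : ℝ))
    have h3 := le_max_left (lam x) 0
    simp only [Real.norm_eq_abs, Pi.add_apply]
    have hR : |(max (lam x) 0) + (M : ℝ)| = max (lam x) 0 + (M : ℝ) :=
      abs_of_nonneg (by linarith)
    rw [hR, abs_le]
    exact ⟨by linarith, max_le (by linarith) (by linarith)⟩
  have hgm : ∀ M : ℕ, Measurable (fun x => f' x - max (lam x) (-(M : ℝ))) :=
    fun M => hf'm.sub (hlamM_meas M)
  have hgi : ∀ M : ℕ, Integrable (fun x => f' x - max (lam x) (-(M : ℝ))) μ :=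
    fun M => hf'i.sub (hlamM_int M)
  -- the sets
  set S : ℕ → Set X := fun M =>
    {x | ∃ k, 1 ≤ k ∧ 0 < birkhoffSum T (fun y => f' y - max (lam y) (-(M : ℝ))) k x} with hSdef
  set E : ℕ → Set X := fun M =>
    {x | ∃ k, 1 ≤ k ∧ max (lam x) (-(M : ℝ)) < birkhoffAverage ℝ T f k x} with hEdef
  have hSE : ∀ M, S M =ᵐ[μ] E M := by
    intro M
    rw [Filter.eventuallyEq_set]
    filter_upwards [hG] with x hx
    have hsum : ∀ k : ℕ, birkhoffSum T (fun y => f' y - max (lam y) (-(M : ℝ))) k x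
        = birkhoffSum T f k x - (k : ℝ) * max (lam x) (-(M : ℝ)) := by
      intro k
      have e1 : ∀ j : ℕ, f' (T^[j] x) - max (lam (T^[j] x)) (-(M : ℝ))
          = f (T^[j] x) - max (lam x) (-(M : ℝ)) := by
        intro j
        rw [(hx j).2, ← (hx j).1]
      unfold birkhoffSum
      rw [Finset.sum_congr rfl fun j _ => e1 j, Finset.sum_sub_distrib,
        Finset.sum_const, Finset.card_range, nsmul_eq_mul]
    have hiff : ∀ k : ℕ, 1 ≤ k →
        (0 < birkhoffSum T (fun y => f' y - max (lam y) (-(M : ℝ))) k x ↔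
          max (lam x) (-(M : ℝ)) < birkhoffAverage ℝ T f k x) := by
      intro k hk1
      have hkpos : (0 : ℝ) < (k : ℝ) := by exact_mod_cast hk1
      rw [hsum k, sub_pos]
      simp only [birkhoffAverage, smul_eq_mul]
      rw [inv_mul_eq_div, lt_div_iff₀ hkpos, mul_comm]
    simp only [hSdef, hEdef, Set.mem_setOf_eq]
    exact exists_congr fun k => and_congr_right fun hk1 => hiff k hk1
  have hlam_le : ∀ (M : ℕ) x, lam x ≤ max (lam x) (-(M : ℝ)) := fun M x => le_max_left _ _
  have hEmono : Monotone E := by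
    refine monotone_nat_of_le_succ fun M x hx => ?_
    obtain ⟨k, hk1, hk⟩ := hx
    refine ⟨k, hk1, lt_of_le_of_lt (max_le_max le_rfl ?_) hk⟩
    have : (M : ℝ) ≤ (M + 1 : ℕ) := by exact_mod_cast Nat.le_succ M
    linarith
  have hUnion : (⋃ M, E M) = {x | ∃ k : ℕ, 1 ≤ k ∧ lam x < birkhoffAverage ℝ T f k x} := by
    ext x
    simp only [hEdef, Set.mem_iUnion, Set.mem_setOf_eq]
    constructor
    · rintro ⟨M, k, hk1, hk⟩
      exact ⟨k, hk1, lt_of_le_of_lt (hlam_le M x) hk⟩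
    · rintro ⟨k, hk1, hk⟩
      obtain ⟨M, hM⟩ := exists_nat_ge (-(lam x))
      refine ⟨M, k, hk1, ?_⟩
      have hml : max (lam x) (-(M : ℝ)) = lam x := max_eq_left (by linarith)
      rwa [hml]
  -- per-M estimate
  have key : ∀ M : ℕ, ∫⁻ x in E M, ENNReal.ofReal (lam x - f x) ∂μ
      ≤ ∫⁻ x in E M, ENNReal.ofReal (f x - lam x) ∂μ := by
    intro M
    have hgar := garsia_lintegral hT (hgm M) (hgi M)
    have hfS : (fun x => ENNReal.ofReal (max (lam x) (-(M : ℝ)) - f x))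
        =ᵐ[μ] fun x => ENNReal.ofReal (-(f' x - max (lam x) (-(M : ℝ)))) := by
      filter_upwards [hff'] with x hx
      rw [hx, neg_sub]
    have hfS' : (fun x => ENNReal.ofReal (f' x - max (lam x) (-(M : ℝ))))
        =ᵐ[μ] fun x => ENNReal.ofReal (f x - max (lam x) (-(M : ℝ))) := by
      filter_upwards [hff'] with x hx
      rw [hx]
    calc ∫⁻ x in E M, ENNReal.ofReal (lam x - f x) ∂μ
        ≤ ∫⁻ x in E M, ENNReal.ofReal (max (lam x) (-(M : ℝ)) - f x) ∂μ :=
          lintegral_mono fun x =>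
            ENNReal.ofReal_le_ofReal (by have := hlam_le M x; linarith)
      _ = ∫⁻ x in S M, ENNReal.ofReal (max (lam x) (-(M : ℝ)) - f x) ∂μ :=
          setLIntegral_congr (hSE M).symm
      _ = ∫⁻ x in S M, ENNReal.ofReal (-(f' x - max (lam x) (-(M : ℝ)))) ∂μ :=
          lintegral_congr_ae (ae_restrict_of_ae hfS)
      _ ≤ ∫⁻ x in S M, ENNReal.ofReal (f' x - max (lam x) (-(M : ℝ))) ∂μ := hgar
      _ = ∫⁻ x in S M, ENNReal.ofReal (f x - max (lam x) (-(M : ℝ))) ∂μ :=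
          lintegral_congr_ae (ae_restrict_of_ae hfS')
      _ = ∫⁻ x in E M, ENNReal.ofReal (f x - max (lam x) (-(M : ℝ))) ∂μ :=
          setLIntegral_congr (hSE M)
      _ ≤ ∫⁻ x in E M, ENNReal.ofReal (f x - lam x) ∂μ :=
          lintegral_mono fun x =>
            ENNReal.ofReal_le_ofReal (by have := hlam_le M x; linarith)
  rw [← hUnion, setLIntegral_iUnion_of_directed _ hEmono.directed_le,
    setLIntegral_iUnion_of_directed _ hEmono.directed_le]
  exact iSup_le fun M => (key M).trans
    (le_iSup (fun M => ∫⁻ x in E M, ENNReal.ofReal (f x - lam x) ∂μ) M)
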